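/- Let G be a strongly connected digraph with a fixed start vertex s. For any two vertices u and v of G, u and v are 2-edge-connected if and only if all four of the following hold: (i) r_u = r_v (the bridge-decomposition roots of u and v in G_s coincide); (ii) u and v are strongly connected in the induced subgraph G[D(r_u)]; (iii) r^R_u = r^R_v (the bridge-decomposition roots of u and v in G_s^R coincide); and (iv) u and v are strongly connected in the induced subgraph G^R[D^R(r^R_u)]. -/

import Mathlib

/-!  Basic notions for finite directed graphs given by an edge set `E : Set (V × V)`. -/

variable {V : Type*}

/-- A path from `u` to `v`: a nonempty list of vertices starting at `u`, ending at `v`,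
in which every pair of consecutive vertices is an edge. -/
def IsPath (E : Set (V × V)) (u v : V) (p : List V) : Prop :=
  p.Chain' (fun a b => (a, b) ∈ E) ∧ p.head? = some u ∧ p.getLast? = some v

/-- `v` is reachable from `u` by a path. -/
def Reach (E : Set (V × V)) (u v : V) : Prop := ∃ p, IsPath E u v p

/-- Every vertex reaches every other vertex. -/
def StronglyConnected (E : Set (V × V)) : Prop := ∀ u v, Reach E u v

/-- An edge `e` is a strong bridge if its removal destroys strong connectivity. -/
def StrongBridge (E : Set (V × V)) (e : V × V) : Prop :=
  e ∈ E ∧ ¬ StronglyConnected (E \ {e})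

/-- `u` dominates `v` in the flow graph with start vertex `s`:
every path from `s` to `v` contains `u`. -/
def Dominates (E : Set (V × V)) (s u v : V) : Prop :=
  ∀ p, IsPath E s v p → u ∈ p

/-- An edge `e = (e.1, e.2)` is a bridge of the flow graph `G_s`:
every path from `s` to `e.2` contains the edge `e`. -/
def FlowBridge (E : Set (V × V)) (s : V) (e : V × V) : Prop :=
  e ∈ E ∧ ∀ p, IsPath E s e.2 p → [e.1, e.2] <:+: p

/-- The reverse digraph: all edges reversed. -/
def rev (E : Set (V × V)) : Set (V × V) := {e | (e.2, e.1) ∈ E}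

/-- `D(v)`: the set of vertices dominated by `v` in `G_s`. -/
def Dset (E : Set (V × V)) (s v : V) : Set V := {w | Dominates E s v w}

/-- Reachability inside the induced subgraph `G[S]`: a path all of whose vertices lie in `S`. -/
def ReachableIn (E : Set (V × V)) (S : Set V) (u v : V) : Prop :=
  ∃ p, IsPath E u v p ∧ ∀ w ∈ p, w ∈ S

/-- `C` is a strongly connected component of the induced subgraph `G[S]`. -/
def SCCIn (E : Set (V × V)) (S : Set V) (C : Set V) : Prop :=
  C.Nonempty ∧ C ⊆ S ∧
  (∀ u ∈ C, ∀ v ∈ C, ReachableIn E S u v) ∧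
  (∀ v ∈ S, ∀ u ∈ C, ReachableIn E S u v → ReachableIn E S v u → v ∈ C)

/-- A bridge-dominated component: an SCC of `G[D(v)]` for some bridge `(u,v)` of `G_s`. -/
def BridgeDomComponent (E : Set (V × V)) (s : V) (C : Set V) : Prop :=
  ∃ u v, FlowBridge E s (u, v) ∧ SCCIn E (Dset E s v) C

/-- The set of edges used by a path `p`. -/
def pathEdges (p : List V) : Set (V × V) := {e | [e.1, e.2] <:+: p}

/-- `u` and `v` are `2`-edge-connected: there are two edge-disjoint paths from `u` to `v`
and two edge-disjoint paths from `v` to `u`. -/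
def TwoEdgeConnected (E : Set (V × V)) (u v : V) : Prop :=
  (∃ p q, IsPath E u v p ∧ IsPath E u v q ∧ pathEdges p ∩ pathEdges q = ∅) ∧
  (∃ p q, IsPath E v u p ∧ IsPath E v u q ∧ pathEdges p ∩ pathEdges q = ∅)

/-- `u` is the immediate dominator of `v` in `G_s`: a proper dominator of `v`
dominated by every proper dominator of `v`. -/
def ImmDom (E : Set (V × V)) (s u v : V) : Prop :=
  Dominates E s u v ∧ u ≠ v ∧
  ∀ w, Dominates E s w v → w ≠ v → Dominates E s w u

/-- `depth v = |Dom(v)|`, the number of dominators of `v` in `G_s`. -/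
noncomputable def depth (E : Set (V × V)) (s v : V) : ℕ :=
  {u | Dominates E s u v}.ncard

/-- `z` is the nearest common ancestor of `x` and `y` in the dominator tree of `G_s`:
a common dominator of `x` and `y` dominated by every common dominator. -/
def IsNCA (E : Set (V × V)) (s x y z : V) : Prop :=
  Dominates E s z x ∧ Dominates E s z y ∧
  ∀ w, Dominates E s w x → Dominates E s w y → Dominates E s w z

/-- `r` is the bridge-decomposition root of `v` in `G_s`: the deepest dominator `r`
of `v` such that `r = s` or `(d(r), r)` is a bridge of `G_s`. -/
def IsBDRoot (E : Set (V × V)) (s v r : V) : Prop :=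
  Dominates E s r v ∧
  (r = s ∨ ∃ u, ImmDom E s u r ∧ FlowBridge E s (u, r)) ∧
  ∀ r', Dominates E s r' v →
    (r' = s ∨ ∃ u', ImmDom E s u' r' ∧ FlowBridge E s (u', r')) →
    Dominates E s r' r

/-- compatibility: indexed lookup -/
def List.get? {α : Type*} (l : List α) (i : ℕ) : Option α := l[i]?

@[simp] theorem List.get?_eq_getElem?' {α : Type*} (l : List α) (i : ℕ) : l.get? i = l[i]? := rfl

theorem List.get?_zero {α : Type*} (l : List α) : l.get? 0 = l.head? := by
  simp [List.head?_eq_getElem?]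

theorem List.get?_eq_some {α : Type*} {l : List α} {n : ℕ} {a : α} :
    l.get? n = some a ↔ ∃ h, l.get ⟨n, h⟩ = a := by
  simp [List.getElem?_eq_some_iff]

theorem List.get?_eq_get {α : Type*} {l : List α} {n : ℕ} (h : n < l.length) :
    l.get? n = some (l.get ⟨n, h⟩) := by
  simp [h]

theorem List.mem_iff_get? {α : Type*} {a : α} {l : List α} : a ∈ l ↔ ∃ n, l.get? n = some a := by
  simp [List.mem_iff_getElem?]

theorem List.getLast?_eq_get? {α : Type*} (l : List α) : l.getLast? = l.get? (l.length - 1) := by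
  simp [List.getLast?_eq_getElem?]

theorem List.get?_take {α : Type*} {l : List α} {n m : ℕ} (h : n < m) :
    (l.take m).get? n = l.get? n := by
  simp [List.getElem?_take, h]

theorem List.get?_drop {α : Type*} (L : List α) (i j : ℕ) : (L.drop i).get? j = L.get? (i + j) := by
  simp [List.getElem?_drop]

theorem List.get?_append {α : Type*} {l₁ l₂ : List α} {n : ℕ} (hn : n < l₁.length) :
    (l₁ ++ l₂).get? n = l₁.get? n := by
  simp [List.getElem?_append_left hn]

theorem List.get?_append_right {α : Type*} {l₁ l₂ : List α} {n : ℕ} (h : l₁.length ≤ n) :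
    (l₁ ++ l₂).get? n = l₂.get? (n - l₁.length) := by
  simp [List.getElem?_append_right h]

theorem List.get?_cons_succ {α : Type*} {l : List α} {a : α} {n : ℕ} :
    (a :: l).get? (n + 1) = l.get? n := by
  simp

theorem List.nodup_iff_get?_ne_get? {α : Type*} {l : List α} :
    l.Nodup ↔ ∀ i j : ℕ, i < j → j < l.length → l.get? i ≠ l.get? j := by
  simp only [List.get?_eq_getElem?']
  exact List.nodup_iff_getElem?_ne_getElem?

namespace Str5
open List

attribute [local instance] Classical.propDecidable

variable {V : Type*} {E F : Set (V × V)} {S : Set V} {s u v w x y a b : V} {p q : List V}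

theorem isPath_ne_nil (h : IsPath E u v p) : p ≠ [] := by
  intro hp; rw [hp] at h; simp [IsPath] at h

theorem isPath_get?_zero (h : IsPath E u v p) : p.get? 0 = some u := by
  rw [List.get?_zero]; exact h.2.1

theorem isPath_length_pos (h : IsPath E u v p) : 0 < p.length :=
  List.length_pos_iff.2 (isPath_ne_nil h)

theorem isPath_get?_last (h : IsPath E u v p) : p.get? (p.length - 1) = some v := by
  rw [← List.getLast?_eq_get?]; exact h.2.2

theorem isPath_start_mem (h : IsPath E u v p) : u ∈ p :=
  List.mem_iff_get?.2 ⟨0, isPath_get?_zero h⟩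

theorem isPath_end_mem (h : IsPath E u v p) : v ∈ p :=
  List.mem_iff_get?.2 ⟨p.length - 1, isPath_get?_last h⟩

theorem isPath_singleton (u : V) : IsPath E u u [u] := by
  refine ⟨List.isChain_singleton u, rfl, rfl⟩

theorem chain'_get? {R : V → V → Prop} (h : p.Chain' R) {i : ℕ}
    (ha : p.get? i = some a) (hb : p.get? (i+1) = some b) : R a b := by
  have hi : i + 1 < p.length := (List.get?_eq_some.1 hb).1
  have h' := List.isChain_iff_getElem.1 h i (by omega)
  have e1 : p.get ⟨i, by omega⟩ = a := by
    have := List.get?_eq_get (l := p) (n := i) (by omega)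
    rw [this] at ha; exact Option.some_injective _ ha
  have e2 : p.get ⟨i+1, by omega⟩ = b := by
    have := List.get?_eq_get (l := p) (n := i+1) (by omega)
    rw [this] at hb; exact Option.some_injective _ hb
  simp only [List.get_eq_getElem] at e1 e2
  rwa [e1, e2] at h'

theorem mem_pathEdges_iff {e : V × V} :
    e ∈ pathEdges p ↔ ∃ i, p.get? i = some e.1 ∧ p.get? (i+1) = some e.2 := by
  constructor
  · rintro ⟨l1, l2, hl⟩
    refine ⟨l1.length, ?_, ?_⟩
    · rw [← hl, List.append_assoc]
      rw [List.get?_append_right (le_refl _)]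
      simp
    · rw [← hl, List.append_assoc]
      rw [List.get?_append_right (by omega)]
      simp
  · rintro ⟨i, h1, h2⟩
    have hi : i + 1 < p.length := (List.get?_eq_some.1 h2).1
    refine ⟨p.take i, p.drop (i+2), ?_⟩
    have d1 : p.drop i = e.1 :: p.drop (i+1) := by
      rw [List.drop_eq_getElem_cons (by omega)]
      congr 1
      have := List.get?_eq_get (l := p) (n := i) (show i < p.length by omega)
      rw [this] at h1; exact Option.some_injective _ h1
    have d2 : p.drop (i+1) = e.2 :: p.drop (i+2) := by
      rw [List.drop_eq_getElem_cons (by omega)]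
      congr 1
      have := List.get?_eq_get (l := p) (n := i+1) (by omega)
      rw [this] at h2; exact Option.some_injective _ h2
    show p.take i ++ [e.1, e.2] ++ p.drop (i+2) = p
    rw [List.append_assoc]
    calc p.take i ++ ([e.1, e.2] ++ p.drop (i+2))
        = p.take i ++ p.drop i := by rw [d1, d2]; rfl
      _ = p := List.take_append_drop i p

theorem pathEdges_fst_mem {e : V × V} (h : e ∈ pathEdges p) : e.1 ∈ p := by
  obtain ⟨i, h1, _⟩ := mem_pathEdges_iff.1 h
  exact List.mem_iff_get?.2 ⟨i, h1⟩

theorem pathEdges_snd_mem {e : V × V} (h : e ∈ pathEdges p) : e.2 ∈ p := by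
  obtain ⟨i, _, h2⟩ := mem_pathEdges_iff.1 h
  exact List.mem_iff_get?.2 ⟨i+1, h2⟩

theorem pathEdges_mem_E {e : V × V} (hp : IsPath E u v p) (h : e ∈ pathEdges p) : e ∈ E := by
  obtain ⟨i, h1, h2⟩ := mem_pathEdges_iff.1 h
  exact chain'_get? hp.1 h1 h2

theorem pathEdges_singleton (x : V) {e : V × V} : e ∉ pathEdges ([x] : List V) := by
  intro h
  obtain ⟨i, h1, h2⟩ := mem_pathEdges_iff.1 h
  have := (List.get?_eq_some.1 h2).1
  simp at this

end Str5
namespace Str5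
open List

variable {V : Type*} {E F : Set (V × V)} {S : Set V} {s u v w x y a b : V} {p q : List V}

/-- Prefix of a path up to index `i` (inclusive) is a path. -/
theorem isPath_take (h : IsPath E u v p) {i : ℕ} (hx : p.get? i = some x) :
    IsPath E u x (p.take (i+1)) := by
  have hi : i < p.length := (List.get?_eq_some.1 hx).1
  refine ⟨h.1.take _, ?_, ?_⟩
  · rw [← List.get?_zero, List.get?_take (by omega), List.get?_zero, h.2.1]
  · rw [List.getLast?_eq_get?, List.length_take]
    have : min (i+1) p.length - 1 = i := by omega
    rw [this, List.get?_take (by omega)]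
    exact hx

/-- Suffix of a path from index `i` is a path. -/
theorem isPath_drop (h : IsPath E u v p) {i : ℕ} (hx : p.get? i = some x) :
    IsPath E x v (p.drop i) := by
  have hi : i < p.length := (List.get?_eq_some.1 hx).1
  refine ⟨h.1.drop _, ?_, ?_⟩
  · rw [← List.get?_zero, List.get?_drop]
    simpa using hx
  · rw [List.getLast?_eq_get?, List.get?_drop, List.length_drop]
    have : i + (p.length - i - 1) = p.length - 1 := by omega
    rw [this]
    exact isPath_get?_last h

theorem pathEdges_take_subset {i : ℕ} : pathEdges (p.take i) ⊆ pathEdges p := by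
  intro e he
  obtain ⟨j, h1, h2⟩ := mem_pathEdges_iff.1 he
  have hj : j + 1 < (p.take i).length := (List.get?_eq_some.1 h2).1
  have hj' : j + 1 < i := by rw [List.length_take] at hj; omega
  rw [List.get?_take (by omega)] at h1
  rw [List.get?_take hj'] at h2
  exact mem_pathEdges_iff.2 ⟨j, h1, h2⟩

theorem pathEdges_drop_subset {i : ℕ} : pathEdges (p.drop i) ⊆ pathEdges p := by
  intro e he
  obtain ⟨j, h1, h2⟩ := mem_pathEdges_iff.1 he
  rw [List.get?_drop] at h1 h2
  exact mem_pathEdges_iff.2 ⟨i+j, h1, by rw [← Nat.add_assoc] at h2; exact h2⟩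

/-- Concatenation of paths. -/
theorem isPath_append (h1 : IsPath E u v p) (h2 : IsPath E v w q) :
    IsPath E u w (p ++ q.tail) := by
  obtain ⟨c1, hh1, hl1⟩ := h1
  obtain ⟨c2, hh2, hl2⟩ := h2
  have hq : q = v :: q.tail := by
    cases q with
    | nil => simp at hh2
    | cons a t => simp at hh2; subst hh2; rfl
  refine ⟨?_, ?_, ?_⟩
  · unfold List.Chain'
    rw [List.isChain_append]
    refine ⟨c1, ?_, ?_⟩
    · rw [hq] at c2; exact c2.tail
    · intro x hx y hy
      rw [hl1] at hx
      have hx' : v = x := by simpa using hx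
      subst hx'
      rw [hq] at c2
      cases ht : q.tail with
      | nil => rw [ht] at hy; simp at hy
      | cons z t =>
        rw [ht] at hy
        simp at hy
        subst hy
        rw [ht] at c2
        exact List.isChain_cons_cons.1 c2 |>.1
  · rcases p with _ | ⟨a, t⟩
    · simp at hh1
    · simpa using hh1
  · cases ht : q.tail with
    | nil =>
      have hw : v = w := by
        rw [hq, ht] at hl2; simpa using hl2
      simp only [ht, List.append_nil]
      rw [hl1, hw]
    | cons z t =>
      rw [List.getLast?_append_of_ne_nil _ (List.cons_ne_nil z t)]
      rw [hq, ht] at hl2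
      rw [List.getLast?_cons_cons] at hl2
      exact hl2

theorem pathEdges_append_subset (h1 : IsPath E u v p) (h2 : IsPath E v w q) :
    pathEdges (p ++ q.tail) ⊆ pathEdges p ∪ pathEdges q := by
  intro e he
  obtain ⟨j, hj1, hj2⟩ := mem_pathEdges_iff.1 he
  have hq : q = v :: q.tail := by
    cases q with
    | nil => exact absurd h2.2.1 (by simp)
    | cons a t => have := h2.2.1; simp at this; subst this; rfl
  by_cases hc : j + 1 < p.length
  · left
    rw [List.get?_append (by omega)] at hj1
    rw [List.get?_append hc] at hj2
    exact mem_pathEdges_iff.2 ⟨j, hj1, hj2⟩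
  · right
    by_cases hc2 : j + 1 = p.length
    · rw [List.get?_append (by omega)] at hj1
      rw [List.get?_append_right (by omega)] at hj2
      have hlast := isPath_get?_last h1
      rw [show p.length - 1 = j by omega] at hlast
      have h1' : e.1 = v := Option.some_injective _ (hj1.symm.trans hlast)
      refine mem_pathEdges_iff.2 ⟨0, ?_, ?_⟩
      · rw [h1', List.get?_zero]; exact h2.2.1
      · rw [hq, List.get?_cons_succ]
        rw [show j + 1 - p.length = 0 by omega] at hj2
        exact hj2
    · have hjp : p.length ≤ j := by omega
      rw [List.get?_append_right hjp] at hj1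
      rw [List.get?_append_right (by omega)] at hj2
      refine mem_pathEdges_iff.2 ⟨j - p.length + 1, ?_, ?_⟩
      · rw [hq, List.get?_cons_succ]
        exact hj1
      · rw [hq, List.get?_cons_succ]
        rw [show j + 1 - p.length = j - p.length + 1 by omega] at hj2
        exact hj2

theorem mem_append_tail (h2 : IsPath E v w q) (hx : x ∈ p ++ q.tail) : x ∈ p ∨ x ∈ q := by
  rcases List.mem_append.1 hx with h | h
  · exact Or.inl h
  · exact Or.inr (List.mem_of_mem_tail h)

/-- Reversal. -/
theorem isPath_reverse (h : IsPath E u v p) : IsPath (rev E) v u p.reverse := by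
  refine ⟨?_, ?_, ?_⟩
  · unfold List.Chain'
    rw [List.isChain_reverse]
    exact h.1.imp (fun a b hab => hab)
  · rw [List.head?_reverse]; exact h.2.2
  · rw [List.getLast?_reverse]; exact h.2.1

theorem pathEdges_reverse {e : V × V} :
    e ∈ pathEdges p.reverse ↔ (e.2, e.1) ∈ pathEdges p := by
  show [e.1, e.2] <:+: p.reverse ↔ [e.2, e.1] <:+: p
  constructor
  · intro h
    have := List.reverse_infix.2 h
    simpa using this
  · intro h
    have : [e.2, e.1].reverse <:+: p.reverse := List.reverse_infix.1 (by simpa)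
    simpa using this

theorem stronglyConnected_rev (h : StronglyConnected E) : StronglyConnected (rev E) := by
  intro a b
  obtain ⟨p, hp⟩ := h b a
  exact ⟨p.reverse, isPath_reverse hp⟩

theorem twoEdgeConnected_rev (h : TwoEdgeConnected E u v) : TwoEdgeConnected (rev E) u v := by
  obtain ⟨⟨p1, q1, hp1, hq1, hd1⟩, ⟨p2, q2, hp2, hq2, hd2⟩⟩ := h
  constructor
  · refine ⟨p2.reverse, q2.reverse, isPath_reverse hp2, isPath_reverse hq2, ?_⟩
    ext e
    simp only [Set.mem_inter_iff, Set.mem_empty_iff_false, iff_false]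
    rintro ⟨h1, h2⟩
    have := Set.eq_empty_iff_forall_notMem.1 hd2 (e.2, e.1)
    exact this ⟨pathEdges_reverse.1 h1, pathEdges_reverse.1 h2⟩
  · refine ⟨p1.reverse, q1.reverse, isPath_reverse hp1, isPath_reverse hq1, ?_⟩
    ext e
    simp only [Set.mem_inter_iff, Set.mem_empty_iff_false, iff_false]
    rintro ⟨h1, h2⟩
    have := Set.eq_empty_iff_forall_notMem.1 hd1 (e.2, e.1)
    exact this ⟨pathEdges_reverse.1 h1, pathEdges_reverse.1 h2⟩

end Str5
namespace Str5
open List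

attribute [local instance] Classical.propDecidable

variable {V : Type*} {E : Set (V × V)} {s u v w x y a b r : V} {p q : List V}

theorem dominates_self : Dominates E s v v := fun p hp => isPath_end_mem hp

theorem dominates_start : Dominates E s s v := fun p hp => isPath_start_mem hp

/-- first index of a member -/
theorem exists_first_index (hx : x ∈ p) :
    ∃ i, p.get? i = some x ∧ ∀ j < i, p.get? j ≠ some x := by
  obtain ⟨n, hn⟩ := List.mem_iff_get?.1 hx
  have h : ∃ i, p.get? i = some x := ⟨n, hn⟩
  exact ⟨Nat.find h, Nat.find_spec h, fun j hj => Nat.find_min h hj⟩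

/-- Antisymmetry of domination, given the source can reach `x`. -/
theorem dominates_antisymm (hSC : StronglyConnected E)
    (hxy : Dominates E s x y) (hyx : Dominates E s y x) : x = y := by
  have hex : ∃ n, ∃ p : List V, IsPath E s x p ∧ p.length = n := by
    obtain ⟨p, hp⟩ := hSC s x
    exact ⟨p.length, p, hp, rfl⟩
  obtain ⟨p, hp, hlen⟩ := Nat.find_spec hex
  have hmin : ∀ q : List V, IsPath E s x q → p.length ≤ q.length := by
    intro q hq
    by_contra hlt
    push_neg at hlt
    exact Nat.find_min hex (hlen ▸ hlt) ⟨q, hq, rfl⟩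
  -- y is on p; take prefix to first y
  have hy : y ∈ p := hyx p hp
  obtain ⟨i, hi, himin⟩ := exists_first_index hy
  have hyp : IsPath E s y (p.take (i+1)) := isPath_take hp hi
  have hxin : x ∈ p.take (i+1) := hxy _ hyp
  obtain ⟨j, hj⟩ := List.mem_iff_get?.1 hxin
  have hjlt : j < (p.take (i+1)).length := (List.get?_eq_some.1 hj).1
  have hii : i < p.length := (List.get?_eq_some.1 hi).1
  have hjle : j ≤ i := by
    rw [List.length_take] at hjlt; omega
  rw [List.get?_take (by omega)] at hj
  -- prefix to index j is an s→x path
  have hxp : IsPath E s x (p.take (j+1)) := isPath_take hp hj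
  have := hmin _ hxp
  rw [List.length_take] at this
  have hji : j = p.length - 1 := by omega
  have : i = j := by omega
  subst this
  rw [hi] at hj
  exact (Option.some_injective _ hj).symm

/-- If every path from s to w uses edge e, then e is a flow bridge. -/
theorem flowBridge_of_blocked (hSC : StronglyConnected E) {e : V × V}
    (hblock : ∀ p, IsPath E s w p → e ∈ pathEdges p) : FlowBridge E s e := by
  obtain ⟨p0, hp0⟩ := hSC s w
  have heE : e ∈ E := pathEdges_mem_E hp0 (hblock p0 hp0)
  refine ⟨heE, ?_⟩
  intro t ht
  by_contra hte
  have hte' : e ∉ pathEdges t := hte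
  -- take any s→w path, last occurrence of e
  have hmem := hblock p0 hp0
  have hbd : ∀ i, p0.get? i = some e.1 ∧ p0.get? (i+1) = some e.2 → i ≤ p0.length := by
    intro i ⟨h1, _⟩; exact le_of_lt (List.get?_eq_some.1 h1).1
  obtain ⟨i0, hi1, hi2⟩ := mem_pathEdges_iff.1 hmem
  set P : ℕ → Prop := fun i => p0.get? i = some e.1 ∧ p0.get? (i+1) = some e.2 with hP
  have hPi0 : P i0 := ⟨hi1, hi2⟩
  have hle : i0 ≤ p0.length := hbd i0 hPi0
  set k := Nat.findGreatest P p0.length with hk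
  have hPk : P k := Nat.findGreatest_spec hle hPi0
  have hmax : ∀ j, k < j → ¬ P j := by
    intro j hj hPj
    have hjle : j ≤ p0.length := hbd j hPj
    exact absurd (Nat.le_findGreatest hjle hPj) (by omega)
  -- suffix from k+1 : path from e.2 to w avoiding e
  have hsuf : IsPath E e.2 w (p0.drop (k+1)) := isPath_drop hp0 hPk.2
  have hsufe : e ∉ pathEdges (p0.drop (k+1)) := by
    intro hcon
    obtain ⟨j, hj1, hj2⟩ := mem_pathEdges_iff.1 hcon
    rw [List.get?_drop] at hj1 hj2
    exact hmax (k+1+j) (by omega) ⟨hj1, by rw [show k+1+j+1 = k+1+(j+1) by omega]; exact hj2⟩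
  -- compose t (s→e.2, avoiding e) with suffix
  have hcomp : IsPath E s w (t ++ (p0.drop (k+1)).tail) := isPath_append ht hsuf
  have := hblock _ hcomp
  rcases pathEdges_append_subset ht hsuf this with h | h
  · exact hte' h
  · exact hsufe h

theorem flowBridge_ne (hSC : StronglyConnected E) {e : V × V} (hfb : FlowBridge E s e) :
    e.1 ≠ e.2 := by
  intro heq
  obtain ⟨p, hp⟩ := hSC s e.2
  have hb : e.2 ∈ p := isPath_end_mem hp
  obtain ⟨i, hi, himin⟩ := exists_first_index hb
  have hpre : IsPath E s e.2 (p.take (i+1)) := isPath_take hp hi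
  have hinf := hfb.2 _ hpre
  have hinf' : (e.1, e.2) ∈ pathEdges (p.take (i+1)) := hinf
  obtain ⟨j, hj1, hj2⟩ := mem_pathEdges_iff.1 hinf
  have hjlt : j + 1 < (p.take (i+1)).length := (List.get?_eq_some.1 hj2).1
  have hjl : j + 1 ≤ i := by rw [List.length_take] at hjlt; omega
  rw [List.get?_take (by omega)] at hj1
  rw [List.get?_take (by omega)] at hj2
  rw [heq] at hj1
  exact himin j (by omega) hj1

theorem immDom_of_flowBridge (hSC : StronglyConnected E) {e : V × V}
    (hfb : FlowBridge E s e) : ImmDom E s e.1 e.2 := by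
  refine ⟨?_, flowBridge_ne hSC hfb, ?_⟩
  · intro p hp
    exact pathEdges_fst_mem (hfb.2 p hp)
  · intro w hw hwne
    intro p hp
    have hext : IsPath E s e.2 (p ++ [e.2]) := by
      have : IsPath E e.1 e.2 [e.1, e.2] := by
        refine ⟨?_, rfl, rfl⟩
        exact List.isChain_pair.2 hfb.1
      have h2 := isPath_append hp this
      simpa using h2
    have := hw _ hext
    rcases List.mem_append.1 this with h | h
    · exact h
    · simp at h; exact absurd h hwne

/-- If b dominates u and (a,b) is a flow bridge, every s→u path uses the edge (a,b). -/
theorem blocked_of_dom_bridge (hdom : Dominates E s b u) (hfb : FlowBridge E s (a, b)) :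
    ∀ p, IsPath E s u p → (a, b) ∈ pathEdges p := by
  intro p hp
  have hb : b ∈ p := hdom p hp
  obtain ⟨i, hi, _⟩ := exists_first_index hb
  have hpre : IsPath E s b (p.take (i+1)) := isPath_take hp hi
  have hinf := hfb.2 _ hpre
  exact pathEdges_take_subset hinf

end Str5
namespace Str5
open List

attribute [local instance] Classical.propDecidable

variable {V : Type*} {E : Set (V × V)} {s u v w x y a b r ru rv : V} {p q : List V}

theorem not_dominates_iff : ¬ Dominates E s r x ↔ ∃ p, IsPath E s x p ∧ r ∉ p := by
  unfold Dominates; push_neg; rfl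

theorem entry_eq_root (hxD : ¬ Dominates E s r x)
    (hyD : Dominates E s r y) (hxy : (x, y) ∈ E) : y = r := by
  obtain ⟨p, hp, hrp⟩ := not_dominates_iff.1 hxD
  have hstep : IsPath E x y [x, y] := ⟨List.isChain_pair.2 hxy, rfl, rfl⟩
  have hcomp : IsPath E s y (p ++ [y]) := by
    have := isPath_append hp hstep; simpa using this
  have := hyD _ hcomp
  rcases List.mem_append.1 this with h | h
  · exact absurd h hrp
  · simp at h; exact h.symm

theorem entry_edge {a : V} (hfb : FlowBridge E s (a, r)) (hxD : ¬ Dominates E s r x)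
    (hxr : (x, r) ∈ E) : x = a := by
  obtain ⟨p, hp, hrp⟩ := not_dominates_iff.1 hxD
  have hstep : IsPath E x r [x, r] := ⟨List.isChain_pair.2 hxr, rfl, rfl⟩
  have hcomp : IsPath E s r (p ++ [r]) := by
    have := isPath_append hp hstep; simpa using this
  have hinf := hfb.2 _ hcomp
  have hinf' : ((a, r) : V × V) ∈ pathEdges (p ++ [r]) := hinf
  obtain ⟨i, hi1, hi2⟩ := mem_pathEdges_iff.1 hinf'
  have hlt : i + 1 < (p ++ [r]).length := (List.get?_eq_some.1 hi2).1
  rw [List.length_append, List.length_singleton] at hlt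
  have hc : i + 1 = p.length := by
    by_contra hne
    have : i + 1 < p.length := by omega
    rw [List.get?_append this] at hi2
    exact hrp (List.mem_iff_get?.2 ⟨i+1, hi2⟩)
  rw [List.get?_append (by omega)] at hi1
  have hlast := isPath_get?_last hp
  rw [show p.length - 1 = i by omega] at hlast
  exact Option.some_injective _ (hlast.symm.trans hi1)

/-- Key lemma: if x, y are both dominated by a bridge-root r and joined by two
edge-disjoint paths, then y is reachable from x inside D(r). -/
theorem reachableIn_of_pairs (hSC : StronglyConnected E)
    (hr : r = s ∨ ∃ a, ImmDom E s a r ∧ FlowBridge E s (a, r))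
    (hx : Dominates E s r x) (hy : Dominates E s r y)
    (hpair : ∃ p q, IsPath E x y p ∧ IsPath E x y q ∧ pathEdges p ∩ pathEdges q = ∅) :
    ReachableIn E (Dset E s r) x y := by
  rcases hr with hr | ⟨a, _, hfb⟩
  · subst hr
    obtain ⟨p, hp⟩ := hSC x y
    exact ⟨p, hp, fun w _ => dominates_start⟩
  · set S : Set V := {z | ReachableIn E (Dset E s r) x z} with hS
    have hxS : x ∈ S := ⟨[x], isPath_singleton x, by
      intro w hw; simp at hw; subst hw; exact hx⟩
    by_contra hyS
    have hblock : ∀ q', IsPath E x y q' → ((a, r) : V × V) ∈ pathEdges q' := by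
      intro q' hq'
      set N := q'.length with hN
      have hNpos : 0 < N := isPath_length_pos hq'
      have hlast : q'.get? (N - 1) = some y := isPath_get?_last hq'
      -- first bad index
      have hbadex : ∃ j, ∃ z, q'.get? j = some z ∧ z ∉ S :=
        ⟨N - 1, y, hlast, hyS⟩
      set j0 := Nat.find hbadex with hj0
      obtain ⟨z, hzj, hzS⟩ := Nat.find_spec hbadex
      rw [← hj0] at hzj
      have hj0pos : 0 < j0 := by
        rcases Nat.eq_zero_or_pos j0 with h0 | h0
        · exfalso
          have hs := Nat.find_spec hbadex
          rw [← hj0, h0] at hs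
          obtain ⟨z', hz', hz'S⟩ := hs
          rw [isPath_get?_zero hq'] at hz'
          have hzx : x = z' := Option.some_injective _ hz'
          exact hz'S (hzx ▸ hxS)
        · exact h0
      have hj0le : j0 ≤ N - 1 := Nat.find_min' hbadex ⟨y, hlast, hyS⟩
      have hlt1 : j0 - 1 < N := by omega
      obtain ⟨wi, hwi⟩ : ∃ wi, q'.get? (j0 - 1) = some wi :=
        ⟨q'.get ⟨j0-1, hlt1⟩, List.get?_eq_get hlt1⟩
      have hwiS : wi ∈ S := by
        by_contra hcon
        have := Nat.find_min hbadex (m := j0 - 1) (by omega)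
        exact this ⟨wi, hwi, hcon⟩
      have hedge : (wi, z) ∈ E := by
        apply chain'_get? hq'.1 hwi
        rw [show j0 - 1 + 1 = j0 by omega]; exact hzj
      by_cases hzD : z ∈ Dset E s r
      · exfalso
        obtain ⟨pw, hpw, hpwD⟩ := hwiS
        have hstep : IsPath E wi z [wi, z] := ⟨List.isChain_pair.2 hedge, rfl, rfl⟩
        refine hzS ⟨pw ++ [z], by simpa using isPath_append hpw hstep, ?_⟩
        intro w' hw'
        rcases List.mem_append.1 hw' with h | h
        · exact hpwD _ h
        · simp at h; subst h; exact hzD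
      · -- re-entry into D(r) must be at r via the bridge
        have hQex : ∃ k, (∃ z', q'.get? k = some z' ∧ z' ∈ Dset E s r) ∧ j0 ≤ k :=
          ⟨N - 1, ⟨y, hlast, hy⟩, hj0le⟩
        set k0 := Nat.find hQex with hk0
        obtain ⟨⟨y', hy'k, hy'D⟩, hk0ge⟩ := Nat.find_spec hQex
        rw [← hk0] at hy'k hk0ge
        have hk0gt : j0 < k0 := by
          rcases Nat.lt_or_ge j0 k0 with h | h
          · exact h
          · exfalso
            have : k0 = j0 := by omega
            rw [this] at hy'k
            rw [hzj] at hy'k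
            exact hzD ((Option.some_injective _ hy'k) ▸ hy'D)
        have hx'ex : ∃ x', q'.get? (k0 - 1) = some x' := by
          have hk0lt : k0 ≤ N - 1 := Nat.find_min' hQex ⟨⟨y, hlast, hy⟩, hj0le⟩
          have : k0 - 1 < N := by omega
          exact ⟨q'.get ⟨k0-1, this⟩, List.get?_eq_get this⟩
        obtain ⟨x', hx'⟩ := hx'ex
        have hx'D : x' ∉ Dset E s r := by
          intro hcon
          have := Nat.find_min hQex (m := k0 - 1) (by omega)
          exact this ⟨⟨x', hx', hcon⟩, by omega⟩
        have hedge2 : (x', y') ∈ E := by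
          apply chain'_get? hq'.1 hx'
          rw [show k0 - 1 + 1 = k0 by omega]; exact hy'k
        have hy'r : y' = r := entry_eq_root hx'D hy'D hedge2
        have hx'a : x' = a := entry_edge hfb hx'D (hy'r ▸ hedge2)
        refine mem_pathEdges_iff.2 ⟨k0 - 1, ?_, ?_⟩
        · rw [hx'] ; rw [hx'a]
        · rw [show k0 - 1 + 1 = k0 by omega, hy'k, hy'r]
    obtain ⟨p1, q1, hp1, hq1, hd⟩ := hpair
    have h1 := hblock p1 hp1
    have h2 := hblock q1 hq1
    exact absurd (Set.mem_inter h1 h2) (by rw [hd]; exact id)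

/-- From an edge-disjoint pair of v→u paths, the BD-root of u dominates v. -/
theorem dom_of_pairs (hSC : StronglyConnected E) (hru : IsBDRoot E s u ru)
    (hpair : ∃ p q, IsPath E v u p ∧ IsPath E v u q ∧ pathEdges p ∩ pathEdges q = ∅) :
    Dominates E s ru v := by
  rcases hru.2.1 with hr | ⟨a, _, hfb⟩
  · subst hr; exact dominates_start
  · by_contra hnd
    obtain ⟨q0, hq0, hruq0⟩ := not_dominates_iff.1 hnd
    have hblock : ∀ w', IsPath E v u w' → ((a, ru) : V × V) ∈ pathEdges w' := by
      intro w' hw'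
      have hcomp : IsPath E s u (q0 ++ w'.tail) := isPath_append hq0 hw'
      have := blocked_of_dom_bridge hru.1 hfb _ hcomp
      rcases pathEdges_append_subset hq0 hw' this with h | h
      · exact absurd (pathEdges_snd_mem h) hruq0
      · exact h
    obtain ⟨p1, q1, hp1, hq1, hd⟩ := hpair
    exact absurd (Set.mem_inter (hblock p1 hp1) (hblock q1 hq1)) (by rw [hd]; exact id)

theorem roots_eq (hSC : StronglyConnected E) (hru : IsBDRoot E s u ru)
    (hrv : IsBDRoot E s v rv) (h2 : TwoEdgeConnected E u v) : ru = rv := by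
  have h1 : Dominates E s ru v := dom_of_pairs hSC hru h2.2
  have h2' : Dominates E s rv u := dom_of_pairs hSC hrv h2.1
  exact dominates_antisymm hSC (hrv.2.2 ru h1 hru.2.1) (hru.2.2 rv h2' hrv.2.1)

theorem forward_main (hSC : StronglyConnected E) (hru : IsBDRoot E s u ru)
    (hrv : IsBDRoot E s v rv) (h2 : TwoEdgeConnected E u v) :
    ru = rv ∧ ReachableIn E (Dset E s ru) u v ∧ ReachableIn E (Dset E s ru) v u := by
  have he := roots_eq hSC hru hrv h2
  have hduv : Dominates E s ru v := dom_of_pairs hSC hru h2.2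
  exact ⟨he, reachableIn_of_pairs hSC hru.2.1 hru.1 hduv h2.1,
    reachableIn_of_pairs hSC hru.2.1 hduv hru.1 h2.2⟩

end Str5
namespace Str5
open List

attribute [local instance] Classical.propDecidable

variable {V : Type*} {E : Set (V × V)} {s u v w x y a b r : V} {p q : List V}

/-- consecutive pairs of a list -/
def pairs : List V → List (V × V)
  | a :: b :: t => (a, b) :: pairs (b :: t)
  | _ => []

@[simp] theorem pairs_nil : pairs ([] : List V) = [] := rfl
@[simp] theorem pairs_single : pairs ([a] : List V) = [] := rfl
@[simp] theorem pairs_cons_cons {t : List V} :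
    pairs (a :: b :: t) = (a, b) :: pairs (b :: t) := rfl

theorem pairs_get? : ∀ (p : List V) (i : ℕ) (e : V × V),
    ((pairs p).get? i = some e ↔ p.get? i = some e.1 ∧ p.get? (i+1) = some e.2)
  | [], i, e => by simp [pairs]
  | [a], i, e => by
      simp only [pairs_single]
      constructor
      · intro h; simp at h
      · rintro ⟨h1, h2⟩
        have := (List.get?_eq_some.1 h2).1
        simp at this
  | a :: b :: t, 0, e => by
      simp only [pairs_cons_cons]
      constructor
      · intro h
        simp at h
        rw [← h]; simp
      · rintro ⟨h1, h2⟩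
        simp at h1 h2 ⊢
        rw [Prod.ext_iff]; exact ⟨h1, h2⟩
  | a :: b :: t, (i+1), e => by
      simp only [pairs_cons_cons, List.get?_cons_succ]
      exact pairs_get? (b :: t) i e

theorem mem_pairs_iff {e : V × V} : e ∈ pairs p ↔ e ∈ pathEdges p := by
  rw [mem_pathEdges_iff, List.mem_iff_get?]
  constructor
  · rintro ⟨i, hi⟩; exact ⟨i, (pairs_get? p i e).1 hi⟩
  · rintro ⟨i, hi⟩; exact ⟨i, (pairs_get? p i e).2 hi⟩

theorem pairs_length : ∀ p : List V, (pairs p).length = p.length - 1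
  | [] => rfl
  | [a] => rfl
  | a :: b :: t => by
      simp only [pairs_cons_cons, List.length_cons]
      rw [pairs_length (b :: t)]
      simp

/-- removing a loop between equal vertices -/
theorem splice (hp : IsPath E u v p) {i j : ℕ} (hij : i < j)
    (hi : p.get? i = some x) (hj : p.get? j = some x) :
    ∃ q, IsPath E u v q ∧ pathEdges q ⊆ pathEdges p ∧ q.length < p.length := by
  have hjlt : j < p.length := (List.get?_eq_some.1 hj).1
  have h1 : IsPath E u x (p.take (i+1)) := isPath_take hp hi
  have h2 : IsPath E x v (p.drop j) := isPath_drop hp hj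
  refine ⟨p.take (i+1) ++ (p.drop j).tail, isPath_append h1 h2, ?_, ?_⟩
  · intro e he
    rcases pathEdges_append_subset h1 h2 he with h | h
    · exact pathEdges_take_subset h
    · exact pathEdges_drop_subset h
  · rw [List.length_append, List.length_take, List.length_tail, List.length_drop]
    omega

theorem exists_trail : ∀ (n : ℕ) (p : List V), p.length ≤ n → IsPath E u v p →
    ∃ q, IsPath E u v q ∧ pathEdges q ⊆ pathEdges p ∧ (pairs q).Nodup := by
  intro n
  induction n with
  | zero => intro p hl hp; exact absurd (isPath_length_pos hp) (by omega)
  | succ n ih =>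
    intro p hl hp
    by_cases hnd : (pairs p).Nodup
    · exact ⟨p, hp, le_refl _, hnd⟩
    · rw [List.nodup_iff_get?_ne_get?] at hnd
      push_neg at hnd
      obtain ⟨i, j, hij, hjl, heq⟩ := hnd
      have hjsome : ∃ e, (pairs p).get? j = some e := by
        have : j < (pairs p).length := hjl
        exact ⟨(pairs p).get ⟨j, this⟩, List.get?_eq_get this⟩
      obtain ⟨e, he⟩ := hjsome
      have hie : (pairs p).get? i = some e := by rw [heq]; exact he
      have h1 := (pairs_get? p i e).1 hie
      have h2 := (pairs_get? p j e).1 he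
      obtain ⟨q, hq, hsub, hlen⟩ := splice hp hij h1.1 h2.1
      obtain ⟨q', hq', hsub', hnd'⟩ := ih q (by omega) hq
      exact ⟨q', hq', fun e' he' => hsub (hsub' he'), hnd'⟩

theorem isPath_mono {E F : Set (V × V)} (hEF : E ⊆ F) (hp : IsPath E u v p) :
    IsPath F u v p :=
  ⟨hp.1.imp (fun _ _ h => hEF h), hp.2.1, hp.2.2⟩

end Str5
namespace Str5
open List

attribute [local instance] Classical.propDecidable

variable {V : Type*} {E : Set (V × V)} {s u v w x y a b r z : V} {p q : List V}

noncomputable def outD (F : Finset (V × V)) (z : V) : ℤ :=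
  ((F.filter (fun e => e.1 = z)).card : ℤ)

noncomputable def inD (F : Finset (V × V)) (z : V) : ℤ :=
  ((F.filter (fun e => e.2 = z)).card : ℤ)

theorem outD_nonneg (F : Finset (V × V)) (z : V) : 0 ≤ outD F z := Int.ofNat_nonneg _
theorem inD_nonneg (F : Finset (V × V)) (z : V) : 0 ≤ inD F z := Int.ofNat_nonneg _

theorem outD_erase {F : Finset (V × V)} {e : V × V} (he : e ∈ F) (z : V) :
    outD (F.erase e) z = outD F z - (if e.1 = z then 1 else 0) := by
  unfold outD
  rw [Finset.filter_erase]
  by_cases h : e.1 = z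
  · rw [if_pos h, Finset.card_erase_of_mem (Finset.mem_filter.2 ⟨he, h⟩)]
    have hpos : 0 < (F.filter (fun e => e.1 = z)).card :=
      Finset.card_pos.2 ⟨e, Finset.mem_filter.2 ⟨he, h⟩⟩
    omega
  · rw [if_neg h]
    have hne : e ∉ F.filter (fun e => e.1 = z) := fun hc => h (Finset.mem_filter.1 hc).2
    rw [Finset.erase_eq_of_notMem hne]
    simp

theorem inD_erase {F : Finset (V × V)} {e : V × V} (he : e ∈ F) (z : V) :
    inD (F.erase e) z = inD F z - (if e.2 = z then 1 else 0) := by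
  unfold inD
  rw [Finset.filter_erase]
  by_cases h : e.2 = z
  · rw [if_pos h, Finset.card_erase_of_mem (Finset.mem_filter.2 ⟨he, h⟩)]
    have hpos : 0 < (F.filter (fun e => e.2 = z)).card :=
      Finset.card_pos.2 ⟨e, Finset.mem_filter.2 ⟨he, h⟩⟩
    omega
  · rw [if_neg h]
    have hne : e ∉ F.filter (fun e => e.2 = z) := fun hc => h (Finset.mem_filter.1 hc).2
    rw [Finset.erase_eq_of_notMem hne]
    simp

theorem filter_sdiff' (F T : Finset (V × V)) (P : V × V → Prop) :
    (F \ T).filter P = F.filter P \ T.filter P := by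
  ext e
  simp only [Finset.mem_filter, Finset.mem_sdiff]
  tauto

theorem outD_sdiff {F T : Finset (V × V)} (h : T ⊆ F) (z : V) :
    outD (F \ T) z = outD F z - outD T z := by
  unfold outD
  rw [filter_sdiff']
  rw [Finset.card_sdiff_of_subset (Finset.filter_subset_filter _ h)]
  have := Finset.card_le_card (Finset.filter_subset_filter (fun e : V × V => e.1 = z) h)
  omega

theorem inD_sdiff {F T : Finset (V × V)} (h : T ⊆ F) (z : V) :
    inD (F \ T) z = inD F z - inD T z := by
  unfold inD
  rw [filter_sdiff']
  rw [Finset.card_sdiff_of_subset (Finset.filter_subset_filter _ h)]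
  have := Finset.card_le_card (Finset.filter_subset_filter (fun e : V × V => e.2 = z) h)
  omega

theorem outD_union {F T : Finset (V × V)} (h : Disjoint F T) (z : V) :
    outD (F ∪ T) z = outD F z + outD T z := by
  unfold outD
  rw [Finset.filter_union, Finset.card_union_of_disjoint
    (Finset.disjoint_filter_filter h)]
  push_cast; ring

theorem inD_union {F T : Finset (V × V)} (h : Disjoint F T) (z : V) :
    inD (F ∪ T) z = inD F z + inD T z := by
  unfold inD
  rw [Finset.filter_union, Finset.card_union_of_disjoint
    (Finset.disjoint_filter_filter h)]
  push_cast; ring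

theorem outD_insert {F : Finset (V × V)} {e : V × V} (he : e ∉ F) (z : V) :
    outD (insert e F) z = outD F z + (if e.1 = z then 1 else 0) := by
  unfold outD
  rw [Finset.filter_insert]
  by_cases h : e.1 = z
  · rw [if_pos h, if_pos h, Finset.card_insert_of_notMem (fun hc => he (Finset.mem_filter.1 hc).1)]
    push_cast; ring
  · rw [if_neg h, if_neg h]; simp

theorem inD_insert {F : Finset (V × V)} {e : V × V} (he : e ∉ F) (z : V) :
    inD (insert e F) z = inD F z + (if e.2 = z then 1 else 0) := by
  unfold inD
  rw [Finset.filter_insert]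
  by_cases h : e.2 = z
  · rw [if_pos h, if_pos h, Finset.card_insert_of_notMem (fun hc => he (Finset.mem_filter.1 hc).1)]
    push_cast; ring
  · rw [if_neg h, if_neg h]; simp

/-- swap image degree lemmas -/
theorem outD_swap_image {F : Finset (V × V)} (z : V) :
    outD (F.image Prod.swap) z = inD F z := by
  unfold outD inD
  congr 1
  rw [← Finset.card_image_of_injective (F.filter (fun e => e.2 = z)) Prod.swap_injective]
  congr 1
  ext e
  simp only [Finset.mem_filter, Finset.mem_image]
  constructor
  · rintro ⟨⟨f, hf, rfl⟩, hz⟩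
    exact ⟨f, ⟨hf, hz⟩, rfl⟩
  · rintro ⟨f, ⟨hf, hz⟩, rfl⟩
    exact ⟨⟨f, hf, rfl⟩, hz⟩

theorem inD_swap_image {F : Finset (V × V)} (z : V) :
    inD (F.image Prod.swap) z = outD F z := by
  unfold outD inD
  congr 1
  rw [← Finset.card_image_of_injective (F.filter (fun e => e.1 = z)) Prod.swap_injective]
  congr 1
  ext e
  simp only [Finset.mem_filter, Finset.mem_image]
  constructor
  · rintro ⟨⟨f, hf, rfl⟩, hz⟩
    exact ⟨f, ⟨hf, hz⟩, rfl⟩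
  · rintro ⟨f, ⟨hf, hz⟩, rfl⟩
    exact ⟨⟨f, hf, rfl⟩, hz⟩

/-- The degree balance of a trail. -/
theorem trail_balance : ∀ (p : List V) (u v : V), (pairs p).Nodup → p.head? = some u →
    p.getLast? = some v → ∀ z,
    outD (pairs p).toFinset z - inD (pairs p).toFinset z =
      (if u = z then 1 else 0) - (if v = z then 1 else 0)
  | [], u, v, _, h, _ => by simp at h
  | [a], u, v, _, h1, h2 => by
      intro z
      simp at h1 h2
      subst h1; subst h2
      simp [pairs, outD, inD]
  | a :: b :: t, u, v, hnd, h1, h2 => by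
      intro z
      have ha : a = u := by simpa using h1
      rw [pairs_cons_cons] at hnd ⊢
      have hnmem : (a, b) ∉ (pairs (b :: t)).toFinset := by
        simp only [List.mem_toFinset]
        exact (List.nodup_cons.1 hnd).1
      rw [List.toFinset_cons, outD_insert hnmem, inD_insert hnmem]
      have hrec := trail_balance (b :: t) b v (List.nodup_cons.1 hnd).2 rfl
        (by rw [← h2]; exact (List.getLast?_cons_cons ..).symm) z
      rw [show outD (pairs (b :: t)).toFinset z + (if (a, b).1 = z then 1 else 0) -
          (inD (pairs (b :: t)).toFinset z + (if (a, b).2 = z then 1 else 0)) =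
          (outD (pairs (b :: t)).toFinset z - inD (pairs (b :: t)).toFinset z) +
          ((if (a, b).1 = z then 1 else 0) - (if (a, b).2 = z then 1 else 0)) by ring]
      rw [hrec, ha]
      by_cases hb : b = z <;> by_cases hu : u = z <;> by_cases hv : v = z <;>
        simp [hb, hu, hv]

end Str5
namespace Str5
open List

attribute [local instance] Classical.propDecidable

variable {V : Type*} {E : Set (V × V)} {s u v w x y a b r z : V} {p q : List V}

/-- Extracting a trail from a balanced edge set. -/
theorem exists_trail_finset (v : V) : ∀ (n : ℕ) (F : Finset (V × V)) (w : V), F.card ≤ n →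
    (∀ z, z ≠ v → inD F z ≤ outD F z) → inD F w < outD F w →
    ∃ p, IsPath (↑F : Set (V × V)) w v p ∧ (pairs p).Nodup ∧
      ∀ e ∈ pairs p, e ∈ F := by
  intro n
  induction n with
  | zero =>
    intro F w hcard hbal hw
    exfalso
    have : F = ∅ := Finset.card_eq_zero.1 (by omega)
    subst this
    simp [outD, inD] at hw
  | succ n ih =>
    intro F w hcard hbal hw
    -- there is an edge out of w
    have hne : (F.filter (fun e => e.1 = w)).Nonempty := by
      rw [← Finset.card_pos]
      have h0 := inD_nonneg F w
      unfold outD inD at hw h0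
      by_contra hc
      push_neg at hc
      interval_cases h : (F.filter (fun e => e.1 = w)).card
      · omega
    obtain ⟨e, he⟩ := hne
    obtain ⟨heF, he1⟩ := Finset.mem_filter.1 he
    by_cases hev : e.2 = v
    · refine ⟨[w, v], ⟨?_, rfl, rfl⟩, ?_, ?_⟩
      · apply List.isChain_pair.2
        show ((w, v) : V × V) ∈ (↑F : Set (V × V))
        have : e = (w, v) := by rw [← he1, ← hev]
        rwa [← this]
      · simp [pairs]
      · intro e' he'
        simp [pairs] at he'
        subst he'
        have : e = (w, v) := by rw [← he1, ← hev]
        rwa [← this]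
    · -- recurse in F.erase e from e.2
      have hbal' : ∀ z, z ≠ v → inD (F.erase e) z ≤ outD (F.erase e) z := by
        intro z hz
        rw [outD_erase heF, inD_erase heF]
        have := hbal z hz
        by_cases hzw : z = w
        · subst hzw
          rw [he1]
          simp only [if_pos rfl]
          have : inD F z + 1 ≤ outD F z := by
            have := hbal z hz
            by_cases hzz : e.2 = z
            · omega
            · omega
          split <;> omega
        · have h1 : ¬ (e.1 = z) := by rw [he1]; exact fun hc => hzw hc.symm
          rw [if_neg h1]
          split <;> omega
      have hw' : inD (F.erase e) e.2 < outD (F.erase e) e.2 := by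
        rw [outD_erase heF, inD_erase heF, if_pos rfl]
        by_cases hzw : e.2 = w
        · have h11 : e.1 = e.2 := by rw [he1, hzw]
          rw [if_pos h11, hzw]
          omega
        · have h1 : ¬ (e.1 = e.2) := by rw [he1]; exact fun hc => hzw hc.symm
          rw [if_neg h1]
          have := hbal e.2 hev
          omega
      have hcard' : (F.erase e).card ≤ n := by
        rw [Finset.card_erase_of_mem heF]
        have : 0 < F.card := Finset.card_pos.2 ⟨e, heF⟩
        omega
      obtain ⟨p', hp', hnd', hsub'⟩ := ih (F.erase e) e.2 hcard' hbal' hw'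
      -- prepend w
      have hp'cons : ∃ t, p' = e.2 :: t := by
        cases p' with
        | nil => exact absurd hp'.2.1 (by simp)
        | cons c t =>
          have := hp'.2.1; simp at this; subst this; exact ⟨t, rfl⟩
      obtain ⟨t, rfl⟩ := hp'cons
      refine ⟨w :: e.2 :: t, ⟨?_, rfl, ?_⟩, ?_, ?_⟩
      · unfold List.Chain'
        rw [List.isChain_cons_cons]
        constructor
        · show ((w, e.2) : V × V) ∈ (↑F : Set (V × V))
          have : e = (w, e.2) := by rw [← he1]
          rwa [← this]
        · exact hp'.1.imp (fun a b hab => Finset.mem_of_mem_erase hab)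
      · rw [List.getLast?_cons_cons]
        exact hp'.2.2
      · rw [pairs_cons_cons, List.nodup_cons]
        refine ⟨?_, hnd'⟩
        intro hc
        have := hsub' _ hc
        have heq : e = (w, e.2) := by rw [← he1]
        rw [← heq] at this
        exact (Finset.notMem_erase e F) this
      · intro e' he'
        rw [pairs_cons_cons] at he'
        rcases List.mem_cons.1 he' with h | h
        · subst h
          have heq : e = (w, e.2) := by rw [← he1]
          rwa [← heq]
        · exact Finset.mem_of_mem_erase (hsub' _ h)

end Str5
namespace Str5
open List

attribute [local instance] Classical.propDecidable

variable {V : Type*} {E : Set (V × V)} {s u v w x y a b r z : V} {p q : List V}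

/-- The first exit of a path out of a set S containing the start. -/
theorem first_exit {S : Set V} (hq : IsPath E x y q) (hx : x ∈ S) (hy : y ∉ S) :
    ∃ i x' y', q.get? i = some x' ∧ q.get? (i+1) = some y' ∧ x' ∈ S ∧ y' ∉ S ∧
      (x', y') ∈ E ∧ (∀ j z', j ≤ i → q.get? j = some z' → z' ∈ S) := by
  set N := q.length with hN
  have hNpos : 0 < N := isPath_length_pos hq
  have hlast : q.get? (N - 1) = some y := isPath_get?_last hq
  have hbadex : ∃ j, ∃ z, q.get? j = some z ∧ z ∉ S := ⟨N - 1, y, hlast, hy⟩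
  set j0 := Nat.find hbadex with hj0
  obtain ⟨z, hzj, hzS⟩ := Nat.find_spec hbadex
  rw [← hj0] at hzj
  have hj0pos : 0 < j0 := by
    rcases Nat.eq_zero_or_pos j0 with h0 | h0
    · exfalso
      rw [h0] at hzj
      rw [isPath_get?_zero hq] at hzj
      exact hzS ((Option.some_injective _ hzj) ▸ hx)
    · exact h0
  have hj0le : j0 ≤ N - 1 := Nat.find_min' hbadex ⟨y, hlast, hy⟩
  have hlt1 : j0 - 1 < N := by omega
  obtain ⟨wi, hwi⟩ : ∃ wi, q.get? (j0 - 1) = some wi :=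
    ⟨q.get ⟨j0-1, hlt1⟩, List.get?_eq_get hlt1⟩
  have hwiS : wi ∈ S := by
    by_contra hcon
    exact Nat.find_min hbadex (m := j0 - 1) (by omega) ⟨wi, hwi, hcon⟩
  refine ⟨j0 - 1, wi, z, hwi, ?_, hwiS, hzS, ?_, ?_⟩
  · rw [show j0 - 1 + 1 = j0 by omega]; exact hzj
  · apply chain'_get? hq.1 hwi
    rw [show j0 - 1 + 1 = j0 by omega]; exact hzj
  · intro j z' hj hz'
    by_contra hcon
    exact Nat.find_min hbadex (m := j) (by omega) ⟨z', hz', hcon⟩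

theorem menger2 (huv : u ≠ v) (hex : ∃ p, IsPath E u v p)
    (havoid : ∀ e : V × V, ∃ q, IsPath E u v q ∧ e ∉ pathEdges q) :
    ∃ p q, IsPath E u v p ∧ IsPath E u v q ∧ pathEdges p ∩ pathEdges q = ∅ := by
  obtain ⟨p0', hp0'⟩ := hex
  obtain ⟨p0, hp0, hp0sub, hp0nd⟩ := exists_trail p0'.length p0' (le_refl _) hp0'
  set R : Set (V × V) := (E \ pathEdges p0) ∪ {e | (e.2, e.1) ∈ pathEdges p0} with hR
  set S : Set V := {z | ∃ g, IsPath R u z g} with hS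
  have huS : u ∈ S := ⟨[u], isPath_singleton u⟩
  have hSext : ∀ x y, x ∈ S → (x, y) ∈ R → y ∈ S := by
    intro x y hxS hxy
    obtain ⟨g, hg⟩ := hxS
    have hstep : IsPath R x y [x, y] := ⟨List.isChain_pair.2 hxy, rfl, rfl⟩
    exact ⟨g ++ [y], by simpa using isPath_append hg hstep⟩
  by_cases hvS : v ∈ S
  · -- augmenting case
    obtain ⟨g0, hg0⟩ := hvS
    obtain ⟨g, hg, hgsub, hgnd⟩ := exists_trail g0.length g0 (le_refl _) hg0
    set P : Finset (V × V) := (pairs p0).toFinset with hP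
    set G : Finset (V × V) := (pairs g).toFinset with hG
    have memP : ∀ e : V × V, e ∈ P ↔ e ∈ pathEdges p0 := by
      intro e; rw [hP, List.mem_toFinset, mem_pairs_iff]
    have memG : ∀ e : V × V, e ∈ G ↔ e ∈ pathEdges g := by
      intro e; rw [hG, List.mem_toFinset, mem_pairs_iff]
    have hPE : ∀ e ∈ P, e ∈ E := fun e he => pathEdges_mem_E hp0 ((memP e).1 he)
    have hGR : ∀ e ∈ G, e ∈ R := fun e he => pathEdges_mem_E hg ((memG e).1 he)
    set Gf : Finset (V × V) := G.filter (fun e => e ∈ E ∧ e ∉ pathEdges p0) with hGf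
    set Gb : Finset (V × V) := G \ Gf with hGb
    have hGbP : ∀ e ∈ Gb, (e.2, e.1) ∈ pathEdges p0 := by
      intro e he
      obtain ⟨heG, heGf⟩ := Finset.mem_sdiff.1 he
      rcases hGR e heG with h | h
      · exact absurd (Finset.mem_filter.2 ⟨heG, h.1, h.2⟩) heGf
      · exact h
    set Pb : Finset (V × V) := Gb.image Prod.swap with hPb
    have hPbP : Pb ⊆ P := by
      intro e he
      obtain ⟨f, hf, rfl⟩ := Finset.mem_image.1 he
      exact (memP _).2 (hGbP f hf)
    set F : Finset (V × V) := (P \ Pb) ∪ Gf with hF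
    have hFE : (↑F : Set (V × V)) ⊆ E := by
      intro e he
      rcases Finset.mem_union.1 he with h | h
      · exact hPE e (Finset.mem_sdiff.1 h).1
      · exact (Finset.mem_filter.1 h).2.1
    have hdisj : Disjoint (P \ Pb) Gf := by
      rw [Finset.disjoint_left]
      intro e he hGfe
      exact (Finset.mem_filter.1 hGfe).2.2 ((memP e).1 (Finset.mem_sdiff.1 he).1)
    have hGfG : Gf ⊆ G := Finset.filter_subset _ _
    have hbalF : ∀ z, outD F z - inD F z =
        2 * ((if u = z then 1 else 0) - (if v = z then 1 else 0)) := by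
      intro z
      have e1 : outD F z = outD P z - outD Pb z + outD Gf z := by
        rw [hF, outD_union hdisj, outD_sdiff hPbP]
      have e2 : inD F z = inD P z - inD Pb z + inD Gf z := by
        rw [hF, inD_union hdisj, inD_sdiff hPbP]
      have e3 : outD Pb z = inD Gb z := by rw [hPb, outD_swap_image]
      have e4 : inD Pb z = outD Gb z := by rw [hPb, inD_swap_image]
      have e5 : outD Gb z = outD G z - outD Gf z := by rw [hGb, outD_sdiff hGfG]
      have e6 : inD Gb z = inD G z - inD Gf z := by rw [hGb, inD_sdiff hGfG]
      have b1 := trail_balance p0 u v hp0nd hp0.2.1 hp0.2.2 z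
      have b2 := trail_balance g u v hgnd hg.2.1 hg.2.2 z
      rw [← hP] at b1
      rw [← hG] at b2
      linarith
    have hstart : inD F u < outD F u := by
      have := hbalF u
      rw [if_pos rfl, if_neg (fun h : v = u => huv h.symm)] at this
      linarith
    have hbal1 : ∀ z, z ≠ v → inD F z ≤ outD F z := by
      intro z hz
      have := hbalF z
      rw [if_neg (fun h : v = z => hz h.symm)] at this
      by_cases hu : u = z
      · rw [if_pos hu] at this; linarith
      · rw [if_neg hu] at this; linarith
    obtain ⟨p1, hp1, hnd1, hsub1⟩ :=
      exists_trail_finset v F.card F u (le_refl _) hbal1 hstart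
    set T : Finset (V × V) := (pairs p1).toFinset with hT
    have hTF : T ⊆ F := by
      intro e he
      exact hsub1 e (List.mem_toFinset.1 he)
    set F2 : Finset (V × V) := F \ T with hF2
    have hbalF2 : ∀ z, z ≠ v → inD F2 z ≤ outD F2 z := by
      intro z hz
      have h1 : outD F2 z = outD F z - outD T z := by rw [hF2, outD_sdiff hTF]
      have h2 : inD F2 z = inD F z - inD T z := by rw [hF2, inD_sdiff hTF]
      have b1 := trail_balance p1 u v hnd1 hp1.2.1 hp1.2.2 z
      rw [← hT] at b1
      have b2 := hbalF z
      rw [if_neg (fun h : v = z => hz h.symm)] at b1 b2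
      by_cases hu : u = z
      · rw [if_pos hu] at b1 b2; linarith
      · rw [if_neg hu] at b1 b2; linarith
    have hstart2 : inD F2 u < outD F2 u := by
      have h1 : outD F2 u = outD F u - outD T u := by rw [hF2, outD_sdiff hTF]
      have h2 : inD F2 u = inD F u - inD T u := by rw [hF2, inD_sdiff hTF]
      have b1 := trail_balance p1 u v hnd1 hp1.2.1 hp1.2.2 u
      rw [← hT] at b1
      have b2 := hbalF u
      rw [if_pos rfl, if_neg (fun h : v = u => huv h.symm)] at b1 b2
      linarith
    obtain ⟨p2, hp2, hnd2, hsub2⟩ :=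
      exists_trail_finset v F2.card F2 u (le_refl _) hbalF2 hstart2
    refine ⟨p1, p2, isPath_mono hFE hp1, ?_, ?_⟩
    · refine isPath_mono ?_ hp2
      intro e he
      exact hFE (Finset.mem_sdiff.1 he).1
    · ext e
      simp only [Set.mem_inter_iff, Set.mem_empty_iff_false, iff_false]
      rintro ⟨h1, h2⟩
      have he1 : e ∈ T := List.mem_toFinset.2 (mem_pairs_iff.2 h1)
      have he2 : e ∈ F2 := hsub2 e (mem_pairs_iff.2 h2)
      exact (Finset.mem_sdiff.1 he2).2 he1
  · -- cut case
    exfalso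
    obtain ⟨i, wi, z0, hi1, hi2, hwiS, hz0S, hedge, hmin⟩ := first_exit hp0 huS hvS
    set e0 : V × V := (wi, z0) with he0def
    have he0 : e0 ∈ pathEdges p0 := mem_pathEdges_iff.2 ⟨i, hi1, hi2⟩
    have CQ : ∀ x' y', (x', y') ∈ E → x' ∈ S → y' ∉ S → (x', y') ∈ pathEdges p0 := by
      intro x' y' hE hx' hy'
      by_contra hc
      exact hy' (hSext x' y' hx' (Or.inl ⟨hE, hc⟩))
    have CR : ∀ x' y', (x', y') ∈ pathEdges p0 → y' ∈ S → x' ∈ S := by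
      intro x' y' hmem hy'
      exact hSext y' x' hy' (Or.inr hmem)
    have stayout : ∀ k z1, p0.get? k = some z1 → z1 ∉ S →
        ∀ d z2, p0.get? (k + d) = some z2 → z2 ∉ S := by
      intro k z1 hk hz1 d
      induction d with
      | zero =>
        intro z2 hz2
        rw [Nat.add_zero, hk] at hz2
        exact (Option.some_injective _ hz2) ▸ hz1
      | succ d ihd =>
        intro z2 hz2
        have hlt : k + d < p0.length := by
          have := (List.get?_eq_some.1 hz2).1
          omega
        obtain ⟨z', hz'⟩ : ∃ z', p0.get? (k + d) = some z' :=
          ⟨p0.get ⟨k+d, hlt⟩, List.get?_eq_get hlt⟩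
        have hz'S := ihd z' hz'
        intro hz2S
        have hpair : (z', z2) ∈ pathEdges p0 :=
          mem_pathEdges_iff.2 ⟨k + d, hz', by rw [show k+d+1 = k+(d+1) by omega]; exact hz2⟩
        exact hz'S (CR z' z2 hpair hz2S)
    have uniq : ∀ x' y', (x', y') ∈ pathEdges p0 → x' ∈ S → y' ∉ S → (x', y') = e0 := by
      intro x' y' hmem hx' hy'
      obtain ⟨k, hk1, hk2⟩ := mem_pathEdges_iff.1 hmem
      have hki : k ≤ i := by
        by_contra hc
        push_neg at hc
        have : x' ∉ S := stayout (i+1) z0 hi2 hz0S (k - (i+1)) x'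
          (by rw [show i+1+(k-(i+1)) = k by omega]; exact hk1)
        exact this hx'
      have hik : i ≤ k := by
        by_contra hc
        push_neg at hc
        exact hy' (hmin (k+1) y' (by omega) hk2)
      have hk : k = i := by omega
      subst hk
      rw [hi1] at hk1
      rw [hi2] at hk2
      rw [he0def, Prod.ext_iff]
      exact ⟨(Option.some_injective _ hk1).symm ▸ rfl,
        (Option.some_injective _ hk2).symm ▸ rfl⟩
    obtain ⟨q', hq', hq'avoid⟩ := havoid e0
    obtain ⟨k, x', y', hk1, hk2, hx'S, hy'S, hedge', _⟩ := first_exit hq' huS hvS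
    have hmem := CQ x' y' hedge' hx'S hy'S
    have := uniq x' y' hmem hx'S hy'S
    exact hq'avoid (this ▸ mem_pathEdges_iff.2 ⟨k, hk1, hk2⟩)

end Str5
namespace Str5
open List

variable {V : Type*} {E : Set (V × V)} {s : V}

theorem rev_rev : rev (rev E) = E := by
  ext ⟨a, b⟩; rfl

theorem block_contra (hSC : StronglyConnected E) {x y : V} {e : V × V} {r r2 : V}
    (hblock : ∀ q, IsPath E x y q → e ∈ pathEdges q)
    (hry : IsBDRoot E s y r)
    (hP : ReachableIn E (Dset E s r) x y)
    (hrRx : IsBDRoot (rev E) s x r2)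
    (hQ : ReachableIn (rev E) (Dset (rev E) s r2) y x) : False := by
  by_cases hc : ∀ t, IsPath E s y t → e ∈ pathEdges t
  · have hfb : FlowBridge E s e := flowBridge_of_blocked hSC hc
    have himm : ImmDom E s e.1 e.2 := immDom_of_flowBridge hSC hfb
    have hbdomy : Dominates E s e.2 y := fun t ht => pathEdges_snd_mem (hc t ht)
    have hroot : e.2 = s ∨ ∃ u', ImmDom E s u' e.2 ∧ FlowBridge E s (u', e.2) :=
      Or.inr ⟨e.1, himm, by rw [Prod.mk.eta]; exact hfb⟩
    have hbr : Dominates E s e.2 r := hry.2.2 e.2 hbdomy hroot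
    obtain ⟨P, hPp, hPD⟩ := hP
    have heP : e ∈ pathEdges P := hblock P hPp
    have hra : Dominates E s r e.1 := hPD e.1 (pathEdges_fst_mem heP)
    have hrb : Dominates E s r e.2 := hPD e.2 (pathEdges_snd_mem heP)
    have hbeq : e.2 = r := dominates_antisymm hSC hbr hrb
    have haeq : e.1 = r := dominates_antisymm hSC (hbeq ▸ himm.1) hra
    exact himm.2.1 (haeq.trans hbeq.symm)
  · push_neg at hc
    obtain ⟨t1, ht1, ht1e⟩ := hc
    have hc2 : ∀ t, IsPath E x s t → e ∈ pathEdges t := by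
      intro t ht
      by_contra hte
      have hcomp : IsPath E x y (t ++ t1.tail) := isPath_append ht ht1
      rcases pathEdges_append_subset ht ht1 (hblock _ hcomp) with h | h
      · exact hte h
      · exact ht1e h
    have hSCR := stronglyConnected_rev hSC
    have hcR : ∀ t, IsPath (rev E) s x t → ((e.2, e.1) : V × V) ∈ pathEdges t := by
      intro t ht
      have htrev : IsPath E x s t.reverse := by
        have := isPath_reverse (E := rev E) ht
        rwa [rev_rev] at this
      exact pathEdges_reverse.1 (hc2 _ htrev)
    have hfbR : FlowBridge (rev E) s (e.2, e.1) := flowBridge_of_blocked hSCR hcR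
    have himmR : ImmDom (rev E) s e.2 e.1 := immDom_of_flowBridge hSCR hfbR
    have hadomx : Dominates (rev E) s e.1 x := fun t ht => pathEdges_snd_mem (hcR t ht)
    have hrootR : e.1 = s ∨ ∃ u', ImmDom (rev E) s u' e.1 ∧ FlowBridge (rev E) s (u', e.1) :=
      Or.inr ⟨e.2, himmR, hfbR⟩
    have har2 : Dominates (rev E) s e.1 r2 := hrRx.2.2 e.1 hadomx hrootR
    obtain ⟨Q, hQp, hQD⟩ := hQ
    have hQrev : IsPath E x y Q.reverse := by
      have := isPath_reverse (E := rev E) hQp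
      rwa [rev_rev] at this
    have heQ : ((e.2, e.1) : V × V) ∈ pathEdges Q := pathEdges_reverse.1 (hblock _ hQrev)
    have hr2a : Dominates (rev E) s r2 e.1 := hQD e.1 (pathEdges_snd_mem heQ)
    have hr2b : Dominates (rev E) s r2 e.2 := hQD e.2 (pathEdges_fst_mem heQ)
    have haeq : e.1 = r2 := dominates_antisymm hSCR har2 hr2a
    have hbeq : e.2 = r2 := dominates_antisymm hSCR (haeq ▸ himmR.1) hr2b
    exact himmR.2.1 (hbeq.trans haeq.symm)

end Str5
/-- `u` and `v` are 2-edge-connected iff their bridge-decomposition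
roots coincide and they are strongly connected in the induced subgraph of the
dominated set of the root, both in `G_s` and in `G_s^R`. -/
theorem stmt5 {V : Type*} (E : Set (V × V)) (s u v ru rv rRu rRv : V)
    (hSC : StronglyConnected E)
    (hru : IsBDRoot E s u ru) (hrv : IsBDRoot E s v rv)
    (hrRu : IsBDRoot (rev E) s u rRu) (hrRv : IsBDRoot (rev E) s v rRv) :
    TwoEdgeConnected E u v ↔
      (ru = rv ∧
       ReachableIn E (Dset E s ru) u v ∧ ReachableIn E (Dset E s ru) v u ∧
       rRu = rRv ∧
       ReachableIn (rev E) (Dset (rev E) s rRu) u v ∧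
       ReachableIn (rev E) (Dset (rev E) s rRu) v u) := by
  constructor
  · intro h2
    obtain ⟨he, ha, hb⟩ := Str5.forward_main hSC hru hrv h2
    obtain ⟨heR, hc, hd⟩ := Str5.forward_main (Str5.stronglyConnected_rev hSC) hrRu hrRv
      (Str5.twoEdgeConnected_rev h2)
    exact ⟨he, ha, hb, heR, hc, hd⟩
  · rintro ⟨he, h1, h2, heR, h3, h4⟩
    by_cases huv : u = v
    · subst huv
      refine ⟨⟨[u], [u], Str5.isPath_singleton u, Str5.isPath_singleton u, ?_⟩,
        ⟨[u], [u], Str5.isPath_singleton u, Str5.isPath_singleton u, ?_⟩⟩ <;>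
      · ext e
        simp only [Set.mem_inter_iff, Set.mem_empty_iff_false, iff_false]
        rintro ⟨hh, _⟩
        exact Str5.pathEdges_singleton u hh
    · constructor
      · apply Str5.menger2 huv (hSC u v)
        intro e
        by_contra hcon
        push_neg at hcon
        exact Str5.block_contra hSC hcon (by rw [he]; exact hrv) h1 hrRu h4
      · apply Str5.menger2 (fun h => huv h.symm) (hSC v u)
        intro e
        by_contra hcon
        push_neg at hcon
        exact Str5.block_contra hSC hcon hru h2 (by rw [heR]; exact hrRv) h3
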